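/- Let f : Y → S be a locally finitely-presented monomorphism of schemes with S integral Noetherian with generic point Spec K, and suppose Spec K → S factors through f. Then there exists a nonempty open U ⊆ Y such that f restricted to U is an open immersion onto a dense open subset of S. -/

import Mathlib

open AlgebraicGeometry CategoryTheory TensorProduct

universe u

lemma aux_tmul_surjective {K A : Type*} [Field K] [CommRing A] [Nontrivial A] [Algebra K A]
    (h : ∀ a : A, a ⊗ₜ[K] (1 : A) = (1 : A) ⊗ₜ[K] a) :
    Function.Surjective (algebraMap K A) := by
  intro a
  by_contra ha
  have h1a : a ∉ ({1} : Set A) := by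
    intro hmem
    exact ha ⟨1, by simpa using hmem.symm⟩
  have hspan : a ∉ Submodule.span K ({1} : Set A) := by
    intro hmem
    obtain ⟨c, hc⟩ := Submodule.mem_span_singleton.mp hmem
    exact ha ⟨c, by rw [Algebra.algebraMap_eq_smul_one]; exact hc⟩
  have hli : LinearIndepOn K id (insert a {1} : Set A) :=
    (linearIndepOn_id_insert h1a).mpr ⟨(linearIndepOn_singleton_iff K).mpr one_ne_zero, hspan⟩
  have hsub : (insert a {1} : Set A) ⊆ hli.extend (Set.subset_univ _) :=
    hli.subset_extend _
  let b := Module.Basis.extend hli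
  let ia : hli.extend (Set.subset_univ _) := ⟨a, hsub (Set.mem_insert _ _)⟩
  let i1 : hli.extend (Set.subset_univ _) := ⟨1, hsub (Set.mem_insert_of_mem _ rfl)⟩
  have hba : b ia = a := Module.Basis.extend_apply_self hli ia
  have hb1 : b i1 = 1 := Module.Basis.extend_apply_self hli i1
  have key : (b.tensorProduct b) (ia, i1) = (b.tensorProduct b) (i1, ia) := by
    rw [Module.Basis.tensorProduct_apply, Module.Basis.tensorProduct_apply, hba, hb1]
    exact h a
  have : ia = i1 := ((Prod.mk.injEq _ _ _ _).mp ((b.tensorProduct b).injective key)).1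
  exact ha ⟨1, by rw [map_one]; exact (show a = 1 from congrArg Subtype.val this).symm⟩

lemma aux_epi_bijective {K A : Type u} [Field K] [CommRing A] [Nontrivial A] (σ : K →+* A)
    (hepi : ∀ (T : Type u) [CommRing T] (u v : A →+* T), u.comp σ = v.comp σ → u = v) :
    Function.Bijective σ := by
  letI : Algebra K A := σ.toAlgebra
  refine ⟨σ.injective, ?_⟩
  have h : ∀ a : A, a ⊗ₜ[K] (1 : A) = (1 : A) ⊗ₜ[K] a := by
    intro a
    have heq : (Algebra.TensorProduct.includeLeft (R := K) (S := K) (A := A)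
          (B := A)).toRingHom.comp σ
        = (Algebra.TensorProduct.includeRight (R := K) (A := A) (B := A)).toRingHom.comp σ := by
      refine RingHom.ext fun k => ?_
      show (σ k) ⊗ₜ[K] (1 : A) = (1 : A) ⊗ₜ[K] (σ k)
      rw [show σ k = algebraMap K A k from rfl, Algebra.algebraMap_eq_smul_one]
      exact TensorProduct.smul_tmul k 1 1
    have := hepi (A ⊗[K] A) _ _ heq
    exact RingHom.congr_fun this a
  have hs := aux_tmul_surjective h
  rwa [RingHom.algebraMap_toAlgebra] at hs

/-- Let `f : Y → S` be a locally finitely-presented monomorphism of schemes with `S` integral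
Noetherian, and suppose the generic point of `S` lies in the image of `f` (i.e. `Spec K → S`
factors through `f`, `f` being a monomorphism).  Then there exists a nonempty open `U ⊆ Y`
such that `f` restricted to `U` is an open immersion onto a dense open subset of `S`. -/
theorem stmt8 {Y S : AlgebraicGeometry.Scheme} (f : Y ⟶ S) [Mono f]
    [LocallyOfFinitePresentation f] [IsIntegral S] [AlgebraicGeometry.IsNoetherian S]
    [IrreducibleSpace S]
    (hgen : genericPoint S ∈ Set.range f.base) :
    ∃ U : Y.Opens, U ≠ ⊥ ∧ AlgebraicGeometry.IsOpenImmersion (U.ι ≫ f) ∧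
      Dense (Set.range (U.ι ≫ f).base) := by
  obtain ⟨y, hy⟩ := hgen
  -- the stalk map at y is an "epimorphism" because f is a mono
  have hmono : ∀ {C : CommRingCat} (u v : Y.presheaf.stalk y ⟶ C),
      f.stalkMap y ≫ u = f.stalkMap y ≫ v → u = v := by
    intro C u v huv
    have h1 : Spec.map u ≫ Spec.map (f.stalkMap y) ≫ S.fromSpecStalk (f.base y)
        = Spec.map v ≫ Spec.map (f.stalkMap y) ≫ S.fromSpecStalk (f.base y) := by
      rw [← Category.assoc, ← Spec.map_comp, huv, Spec.map_comp, Category.assoc]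
    rw [Scheme.SpecMap_stalkMap_fromSpecStalk] at h1
    rw [← Category.assoc, ← Category.assoc, cancel_mono f, cancel_mono] at h1
    exact Spec.map_injective h1
  -- transport along the identification of stalks
  have e := S.presheaf.stalkCongr (Inseparable.of_eq hy)
  have hmono' : ∀ {C : CommRingCat} (u v : Y.presheaf.stalk y ⟶ C),
      (e.inv ≫ f.stalkMap y) ≫ u = (e.inv ≫ f.stalkMap y) ≫ v → u = v := by
    intro C u v huv
    rw [Category.assoc, Category.assoc, cancel_epi e.inv] at huv
    exact hmono u v huv
  -- the stalk map is an isomorphism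
  have hbij : Function.Bijective (e.inv ≫ f.stalkMap y).hom := by
    refine aux_epi_bijective (K := S.functionField) (A := Y.presheaf.stalk y)
      (e.inv ≫ f.stalkMap y).hom (fun T _ u v huv => ?_)
    exact congrArg CommRingCat.Hom.hom (hmono' (C := CommRingCat.of T) (CommRingCat.ofHom u)
      (CommRingCat.ofHom v) (CommRingCat.hom_ext huv))
  have hiso' : IsIso (e.inv ≫ f.stalkMap y) := by
    let e' := RingEquiv.ofBijective _ hbij
    refine ⟨CommRingCat.ofHom (e'.symm : (Y.presheaf.stalk y : Type _) →+* S.functionField), ?_, ?_⟩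
    · exact CommRingCat.hom_ext (RingHom.ext fun x => e'.symm_apply_apply x)
    · exact CommRingCat.hom_ext (RingHom.ext fun x => e'.apply_symm_apply x)
  have hiso : IsIso (f.stalkMap y) := by
    rw [show f.stalkMap y = e.hom ≫ (e.inv ≫ f.stalkMap y) by rw [Iso.hom_inv_id_assoc]]
    infer_instance
  -- spread out a section of f over an open subset of S
  haveI : LocallyOfFiniteType f := inferInstance
  obtain ⟨U, hxU, g, hg1, hg2⟩ := spread_out_of_isGermInjective' (𝟙 S) f
    (Spec.map (inv (f.stalkMap y)) ≫ Y.fromSpecStalk y) (by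
      rw [Category.comp_id, Category.assoc, ← Scheme.SpecMap_stalkMap_fromSpecStalk,
        ← Spec.map_comp_assoc, IsIso.hom_inv_id, Spec.map_id, Category.id_comp])
  rw [Category.comp_id] at hg2
  have hyW : y ∈ f ⁻¹ᵁ U := hxU
  have hr : Set.range g.base ⊆ Set.range (f ⁻¹ᵁ U).ι.base := by
    rw [Scheme.Opens.range_ι]
    rintro _ ⟨t, rfl⟩
    show f.base (g.base t) ∈ U
    rw [show f.base (g.base t) = (g ≫ f).base t from rfl, hg2]
    exact t.2
  have hfac : IsOpenImmersion.lift (f ⁻¹ᵁ U).ι g hr ≫ (f ⁻¹ᵁ U).ι = g :=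
    IsOpenImmersion.lift_fac _ _ hr
  have hgf : IsOpenImmersion.lift (f ⁻¹ᵁ U).ι g hr ≫ (f ∣_ U) = 𝟙 _ := by
    rw [← cancel_mono U.ι, Category.assoc, morphismRestrict_ι, ← Category.assoc, hfac, hg2,
      Category.id_comp]
  have hfg : (f ∣_ U) ≫ IsOpenImmersion.lift (f ⁻¹ᵁ U).ι g hr = 𝟙 _ := by
    haveI : Mono ((f ⁻¹ᵁ U).ι ≫ f) := mono_comp _ _
    rw [← cancel_mono ((f ⁻¹ᵁ U).ι ≫ f)]
    simp only [Category.assoc, Category.id_comp]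
    rw [reassoc_of% hfac, hg2, morphismRestrict_ι]
  haveI : IsIso (f ∣_ U) := ⟨IsOpenImmersion.lift (f ⁻¹ᵁ U).ι g hr, hfg, hgf⟩
  refine ⟨f ⁻¹ᵁ U, ?_, ?_, ?_⟩
  · intro hbot
    rw [hbot] at hyW
    have h2 : y ∈ ((⊥ : Y.Opens) : Set Y) := hyW
    rw [TopologicalSpace.Opens.coe_bot] at h2
    exact h2
  · rw [← morphismRestrict_ι]
    infer_instance
  · have hmem : genericPoint S ∈ Set.range ((f ⁻¹ᵁ U).ι ≫ f).base :=
      ⟨⟨y, hyW⟩, by rw [← hy]; rfl⟩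
    intro x
    have h1 : closure {genericPoint S} ⊆ closure (Set.range ((f ⁻¹ᵁ U).ι ≫ f).base) :=
      closure_mono (Set.singleton_subset_iff.mpr hmem)
    exact h1 ((genericPoint_spec S).symm ▸ Set.mem_univ x)
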